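/- Fix an integer m ≥ 1, a nonempty subset C_r ⊆ {1,…,m}, and let Ω_r := diag(1_{C_r}) − (1/|C_r|) 1_{C_r} 1_{C_r}^T ∈ ℝ^{m×m}. Let M ∈ ℝ^{m×m} be symmetric positive definite, let P_r be the Moore–Penrose pseudoinverse of Ω_r M Ω_r, and set E_r := P_r M. Then every eigenvalue of E_r is 0 or 1, and trace(E_r) = rank(E_r) = |C_r| − 1. -/

import Mathlib

open Matrix

/-- The centering matrix `Ω_C = diag(1_C) − (1/|C|) 1_C 1_Cᵀ` associated with a cluster `C`. -/
noncomputable def Omega {m : ℕ} (C : Finset (Fin m)) : Matrix (Fin m) (Fin m) ℝ :=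
  Matrix.diagonal (fun i => if i ∈ C then (1 : ℝ) else 0) -
    (1 / (C.card : ℝ)) • Matrix.vecMulVec (fun i => if i ∈ C then (1 : ℝ) else 0)
      (fun i => if i ∈ C then (1 : ℝ) else 0)

/-- `P` is the Moore–Penrose pseudoinverse of `B`. -/
def IsMP {m : ℕ} (B P : Matrix (Fin m) (Fin m) ℝ) : Prop :=
  B * P * B = B ∧ P * B * P = P ∧ (B * P)ᵀ = B * P ∧ (P * B)ᵀ = P * B

/-- `lam` is a (complex) eigenvalue of the real matrix `A`. -/
def IsEigenvalue {m : ℕ} (A : Matrix (Fin m) (Fin m) ℝ) (lam : ℂ) : Prop :=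
  ∃ v : Fin m → ℂ, v ≠ 0 ∧ (A.map (fun a => (a : ℂ))).mulVec v = lam • v

/-- trace of an idempotent real matrix equals its rank. -/
lemma trace_eq_rank_of_idem {m : ℕ} (A : Matrix (Fin m) (Fin m) ℝ) (h : A * A = A) :
    A.trace = (A.rank : ℝ) := by
  set f := A.mulVecLin with hf
  have hff : f ∘ₗ f = f := by
    rw [hf, ← Matrix.mulVecLin_mul, h]
  obtain ⟨p, hp⟩ := (LinearMap.isProj_iff_isIdempotentElem f).mpr hff
  have hrange : p = LinearMap.range f := by
    apply le_antisymm
    · intro x hx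
      exact ⟨x, hp.map_id x hx⟩
    · rintro x ⟨y, rfl⟩
      exact hp.map_mem y
  have htr : LinearMap.trace ℝ (Fin m → ℝ) f = (Module.finrank ℝ p : ℝ) := hp.trace
  have htr2 : LinearMap.trace ℝ (Fin m → ℝ) f = A.trace := by
    rw [LinearMap.trace_eq_matrix_trace ℝ (Pi.basisFun ℝ (Fin m)),
      LinearMap.toMatrix_eq_toMatrix']
    rw [hf, ← Matrix.toLin'_apply', LinearMap.toMatrix'_toLin']
  rw [← htr2, htr, hrange]
  rfl

theorem Er_trace_rank (m : ℕ) (hm : 1 ≤ m) (C : Finset (Fin m)) (hC : C.Nonempty)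
    (M : Matrix (Fin m) (Fin m) ℝ) (hM : M.PosDef)
    (P : Matrix (Fin m) (Fin m) ℝ) (hP : IsMP (Omega C * M * Omega C) P)
    (E : Matrix (Fin m) (Fin m) ℝ) (hE : E = P * M) :
    (∀ lam : ℂ, IsEigenvalue E lam → lam = 0 ∨ lam = 1) ∧
    Matrix.trace E = (C.card : ℝ) - 1 ∧
    E.rank = C.card - 1 := by
  classical
  set v : Fin m → ℝ := fun i => if i ∈ C then (1 : ℝ) else 0 with hv
  have hvmul : ∀ i, v i * v i = v i := by
    intro i; by_cases h : i ∈ C <;> simp [hv, h]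
  have hsumvv : ∑ k, v k * v k = (C.card : ℝ) := by
    rw [Finset.sum_congr rfl (fun k _ => hvmul k)]
    simp [hv]
  have hcpos : (0 : ℝ) < (C.card : ℝ) := by exact_mod_cast hC.card_pos
  have hcne : (C.card : ℝ) ≠ 0 := ne_of_gt hcpos
  set Ω := Omega C with hΩdef
  have hΩeq : Ω = Matrix.diagonal v - (1 / (C.card : ℝ)) • Matrix.vecMulVec v v := by
    rw [hΩdef, Omega, ← hv]
  have hΩT : Ωᵀ = Ω := by
    rw [hΩeq, transpose_sub, Matrix.diagonal_transpose, transpose_smul]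
    congr 1
    ext i j
    simp [Matrix.vecMulVec_apply, mul_comm]
  have hDD : (Matrix.diagonal v) * (Matrix.diagonal v) = Matrix.diagonal v := by
    rw [Matrix.diagonal_mul_diagonal,
      show (fun i => v i * v i) = v from funext hvmul]
  have hDV : (Matrix.diagonal v) * (Matrix.vecMulVec v v) = Matrix.vecMulVec v v := by
    ext i j
    simp only [Matrix.diagonal_mul, Matrix.vecMulVec_apply]
    rw [← mul_assoc, hvmul i]
  have hVD : (Matrix.vecMulVec v v) * (Matrix.diagonal v) = Matrix.vecMulVec v v := by
    ext i j
    simp only [Matrix.mul_diagonal, Matrix.vecMulVec_apply]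
    rw [mul_assoc, hvmul j]
  have hVV : (Matrix.vecMulVec v v) * (Matrix.vecMulVec v v)
      = (C.card : ℝ) • (Matrix.vecMulVec v v) := by
    ext i j
    simp only [Matrix.mul_apply, Matrix.vecMulVec_apply, Matrix.smul_apply, smul_eq_mul]
    calc ∑ k, v i * v k * (v k * v j) = ∑ k, (v i * v j) * (v k * v k) :=
          Finset.sum_congr rfl (fun k _ => by ring)
    _ = (v i * v j) * ∑ k, v k * v k := by rw [Finset.mul_sum]
    _ = (C.card : ℝ) * (v i * v j) := by rw [hsumvv]; ring
  have hΩΩ : Ω * Ω = Ω := by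
    rw [hΩeq, sub_mul, mul_sub, mul_sub, hDD, Matrix.mul_smul, hDV, Matrix.smul_mul,
      Matrix.smul_mul, Matrix.mul_smul, hVD, hVV, smul_smul, smul_smul]
    have : (1 / (C.card : ℝ)) * (1 / (C.card : ℝ)) * (C.card : ℝ) = 1 / (C.card : ℝ) := by
      field_simp
    rw [this]
    abel
  have hMT : Mᵀ = M := hM.isHermitian.eq
  set B := Ω * M * Ω with hBdef
  have hBT : Bᵀ = B := by
    rw [hBdef, transpose_mul, transpose_mul, hΩT, hMT, mul_assoc]
  obtain ⟨h1, h2, h3, h4⟩ := hP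
  have hP1 : P = B * (Pᵀ * P) := by
    conv_lhs => rw [← h2]
    rw [← h4, transpose_mul, hBT, mul_assoc]
  have hP2 : P = (P * Pᵀ) * B := by
    conv_lhs => rw [← h2]
    rw [mul_assoc, ← h3, transpose_mul, hBT, ← mul_assoc, ← mul_assoc]
  have hΩB : Ω * B = B := by
    rw [hBdef, ← mul_assoc, ← mul_assoc, hΩΩ]
  have hBΩ : B * Ω = B := by
    rw [hBdef, mul_assoc, hΩΩ]
  have hΩP : Ω * P = P := by
    conv_lhs => rw [hP1]
    rw [← mul_assoc, hΩB, ← hP1]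
  have hPΩ : P * Ω = P := by
    conv_lhs => rw [hP2]
    rw [mul_assoc, hBΩ, ← hP2]
  have hPMP : P * M * P = P := by
    have key : P * B * P = P * Ω * M * (Ω * P) := by
      rw [hBdef]; simp only [mul_assoc]
    calc P * M * P = P * Ω * M * (Ω * P) := by rw [hPΩ, hΩP]
    _ = P * B * P := key.symm
    _ = P := h2
  have hEE : E * E = E := by
    rw [hE]
    calc P * M * (P * M) = (P * M * P) * M := by simp only [mul_assoc]
    _ = P * M := by rw [hPMP]
  -- trace of Omega
  have hΩtrace : Ω.trace = (C.card : ℝ) - 1 := by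
    rw [hΩeq, Matrix.trace_sub, Matrix.trace_smul, Matrix.trace_diagonal]
    have h1' : ∑ i, v i = (C.card : ℝ) := by simp [hv]
    have h2' : (Matrix.vecMulVec v v).trace = (C.card : ℝ) := by
      rw [Matrix.trace]
      calc ∑ k, Matrix.diag (Matrix.vecMulVec v v) k = ∑ k, v k * v k :=
            Finset.sum_congr rfl (fun k _ => rfl)
      _ = (C.card : ℝ) := hsumvv
    rw [h1', h2', smul_eq_mul]
    field_simp
  have hΩrank : (Ω.rank : ℝ) = (C.card : ℝ) - 1 := by
    rw [← trace_eq_rank_of_idem Ω hΩΩ, hΩtrace]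
  -- rank chain
  have hMdet : IsUnit M.det := isUnit_iff_ne_zero.mpr hM.det_pos.ne'
  open scoped MatrixOrder in
  set S := CFC.sqrt M with hSdef
  open scoped MatrixOrder in
  have hSS : S * S = M := CFC.sqrt_mul_sqrt_self M hM.posSemidef.nonneg
  open scoped MatrixOrder in
  have hST : Sᵀ = S := (CFC.sqrt_nonneg M).posSemidef.isHermitian.eq
  have hSdet : IsUnit S.det := by
    apply isUnit_iff_ne_zero.mpr
    intro h
    apply hM.det_pos.ne'
    rw [← hSS, Matrix.det_mul, h, mul_zero]
  have hBfact : B = (Ω * S) * (Ω * S)ᵀ := by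
    rw [transpose_mul, hST, hΩT, hBdef, ← hSS]
    simp only [mul_assoc]
  have hrankB : B.rank = Ω.rank := by
    rw [hBfact, Matrix.rank_self_mul_transpose, Matrix.rank_mul_eq_left_of_isUnit_det S Ω hSdet]
  have hrankP : P.rank = B.rank := by
    apply le_antisymm
    · calc P.rank = (P * B * P).rank := by rw [h2]
      _ ≤ (P * B).rank := Matrix.rank_mul_le_left _ _
      _ ≤ B.rank := Matrix.rank_mul_le_right _ _
    · calc B.rank = (B * P * B).rank := by rw [h1]
      _ ≤ (B * P).rank := Matrix.rank_mul_le_left _ _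
      _ ≤ P.rank := Matrix.rank_mul_le_right _ _
  have hrankE : E.rank = Ω.rank := by
    rw [hE, Matrix.rank_mul_eq_left_of_isUnit_det M P hMdet, hrankP, hrankB]
  have hrankE' : E.rank = C.card - 1 := by
    have hcast : ((Ω.rank : ℕ) : ℝ) = ((C.card - 1 : ℕ) : ℝ) := by
      rw [hΩrank, Nat.cast_sub hC.card_pos, Nat.cast_one]
    rw [hrankE, Nat.cast_inj.mp hcast]
  refine ⟨?_, ?_, hrankE'⟩
  · rintro lam ⟨w, hw, hlam⟩
    set A := E.map (fun a => (a : ℂ)) with hA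
    have hAA : A * A = A := by
      ext i j
      simp only [hA, Matrix.mul_apply, Matrix.map_apply, ← Complex.ofReal_mul,
        ← Complex.ofReal_sum]
      rw [← Matrix.mul_apply, hEE]
    have h1' : A.mulVec (A.mulVec w) = (lam * lam) • w := by
      rw [hlam, Matrix.mulVec_smul, hlam, smul_smul]
    have h2' : A.mulVec (A.mulVec w) = lam • w := by
      rw [Matrix.mulVec_mulVec, hAA, hlam]
    have hz : (lam * lam - lam) • w = 0 := by
      rw [sub_smul, ← h1', ← h2', sub_self]
    rcases smul_eq_zero.mp hz with h | h
    · have : lam * (lam - 1) = 0 := by linear_combination h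
      rcases mul_eq_zero.mp this with h' | h'
      · exact Or.inl h'
      · exact Or.inr (by linear_combination h')
    · exact absurd h hw
  · rw [trace_eq_rank_of_idem E hEE, hrankE', Nat.cast_sub hC.card_pos, Nat.cast_one]
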